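/- Every cycle has at least 4 turns; consequently, if a region P admits a cycle cover with t turns, then P admits a tour with at most (3/2)·t turns. -/

import Mathlib

/-- A pixel is a point of `ℤ × ℤ`. -/
abbrev Pixel : Type := ℤ × ℤ

/-- Two pixels are adjacent if their ℓ¹-distance is 1. -/
def Adjacent (p q : Pixel) : Prop := |p.1 - q.1| + |p.2 - q.2| = 1

/-- A cycle: a cyclic sequence of `k ≥ 2` pixels (encoded as a `k`-periodic
function on `ℤ`) in which consecutive pixels are adjacent. -/
structure GridCycle where
  k : ℕ
  two_le : 2 ≤ k
  pts : ℤ → Pixel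
  periodic : ∀ i : ℤ, pts (i + k) = pts i
  adj : ∀ i : ℤ, Adjacent (pts i) (pts (i + 1))

/-- The set of pixels covered by a cycle. -/
def GridCycle.covers (C : GridCycle) : Set Pixel := Set.range C.pts

/-- Turn cost at position `i`: 0 if the walk goes straight, 2 for a U-turn,
1 for a 90° turn. -/
def GridCycle.turnCost (C : GridCycle) (i : ℤ) : ℕ :=
  if C.pts (i + 1) - C.pts i = C.pts i - C.pts (i - 1) then 0
  else if C.pts (i + 1) - C.pts i = -(C.pts i - C.pts (i - 1)) then 2
  else 1

/-- The number of turns of a cycle: total turn cost over all positions. -/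
def GridCycle.turns (C : GridCycle) : ℕ :=
  ∑ i ∈ Finset.range C.k, C.turnCost (i : ℤ)

/-- A set of pixels is connected under adjacency. -/
def ConnectedIn (P : Set Pixel) : Prop :=
  ∀ p ∈ P, ∀ q ∈ P, Relation.ReflTransGen (fun a b => b ∈ P ∧ Adjacent a b) p q

/-- A region is a finite nonempty set of pixels connected under adjacency. -/
def IsRegion (P : Set Pixel) : Prop := P.Finite ∧ P.Nonempty ∧ ConnectedIn P

/-- A tour of `P`: a cycle whose pixels lie in `P` covering every pixel of `P`. -/
def IsTour (P : Set Pixel) (C : GridCycle) : Prop := C.covers = P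

/-- A cycle cover of `P`: a finite collection of cycles with pixels in `P`
covering every pixel of `P`. -/
def IsCycleCover (P : Set Pixel) (CC : List GridCycle) : Prop :=
  (∀ C ∈ CC, C.covers ⊆ P) ∧ ∀ p ∈ P, ∃ C ∈ CC, p ∈ C.covers

/-- The number of turns of a cycle cover. -/
def coverTurns (CC : List GridCycle) : ℕ := (CC.map GridCycle.turns).sum

/-- A horizontal strip of `P`: a maximal horizontal run of pixels of `P`. -/
def IsHStrip (P S : Set Pixel) : Prop :=
  ∃ x y : ℤ, ∃ ℓ : ℕ, S = {p : Pixel | p.2 = y ∧ x ≤ p.1 ∧ p.1 ≤ x + (ℓ : ℤ)} ∧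
    S ⊆ P ∧ (x - 1, y) ∉ P ∧ (x + (ℓ : ℤ) + 1, y) ∉ P

/-- A vertical strip of `P`: a maximal vertical run of pixels of `P`. -/
def IsVStrip (P S : Set Pixel) : Prop :=
  ∃ x y : ℤ, ∃ ℓ : ℕ, S = {p : Pixel | p.1 = x ∧ y ≤ p.2 ∧ p.2 ≤ y + (ℓ : ℤ)} ∧
    S ⊆ P ∧ (x, y - 1) ∉ P ∧ (x, y + (ℓ : ℤ) + 1) ∉ P

/-- A strip of `P` is a horizontal or vertical strip. -/
def IsStrip (P S : Set Pixel) : Prop := IsHStrip P S ∨ IsVStrip P S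

/-- A strip cover of `P`: a set of strips of `P` whose union is `P`. -/
def IsStripCover (P : Set Pixel) (F : Set (Set Pixel)) : Prop :=
  (∀ S ∈ F, IsStrip P S) ∧ ⋃₀ F = P

/-- The minimum size of a strip cover of `P`. -/
noncomputable def minStripCover (P : Set Pixel) : ℕ :=
  sInf {m | ∃ F, IsStripCover P F ∧ F.ncard = m}

/-- A rook placement in `P`: a subset of `P` no two distinct elements of which
lie in a common strip of `P`. -/
def IsRookPlacement (P R : Set Pixel) : Prop :=
  R ⊆ P ∧ ∀ p ∈ R, ∀ q ∈ R, p ≠ q → ¬∃ S, IsStrip P S ∧ p ∈ S ∧ q ∈ S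

/-- A maximal rook placement: every pixel of `P` lies in a common strip with
some element of `R`. -/
def IsMaximalRookPlacement (P R : Set Pixel) : Prop :=
  IsRookPlacement P R ∧ ∀ p ∈ P, ∃ r ∈ R, ∃ S, IsStrip P S ∧ p ∈ S ∧ r ∈ S


/- ### auxiliary development -/

def IsDir (u : Pixel) : Prop := |u.1| + |u.2| = 1

lemma adjacent_iff {p q : Pixel} : Adjacent p q ↔ IsDir (q - p) := by
  unfold Adjacent IsDir
  rw [abs_sub_comm p.1 q.1, abs_sub_comm p.2 q.2]
  rfl

lemma adjacent_symm {p q : Pixel} (h : Adjacent p q) : Adjacent q p := by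
  unfold Adjacent at *
  rw [abs_sub_comm q.1 p.1, abs_sub_comm q.2 p.2]; exact h

lemma dir_cases {u : Pixel} (h : IsDir u) :
    u = (1,0) ∨ u = (-1,0) ∨ u = (0,1) ∨ u = (0,-1) := by
  obtain ⟨x, y⟩ := u
  unfold IsDir at h; simp only at h
  simp only [Prod.mk.injEq]
  rcases abs_cases x with ⟨h1, _⟩ | ⟨h1, _⟩ <;> rcases abs_cases y with ⟨h2, _⟩ | ⟨h2, _⟩ <;>
    omega

def tc (u v : Pixel) : ℕ := if v = u then 0 else if v = -u then 2 else 1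

def GridCycle.dir (C : GridCycle) (n : ℤ) : Pixel := C.pts (n + 1) - C.pts n

lemma GridCycle.dir_isDir (C : GridCycle) (n : ℤ) : IsDir (C.dir n) :=
  adjacent_iff.mp (C.adj n)

lemma GridCycle.turnCost_eq (C : GridCycle) (i : ℤ) :
    C.turnCost i = tc (C.dir (i - 1)) (C.dir i) := by
  unfold turnCost dir tc
  have h : i - 1 + 1 = i := by ring
  rw [h]

lemma GridCycle.pts_sub (C : GridCycle) (i : ℤ) : C.pts (i - C.k) = C.pts i := by
  have := C.periodic (i - C.k)
  rw [sub_add_cancel] at this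
  exact this.symm

lemma GridCycle.dir_periodic (C : GridCycle) (n : ℤ) : C.dir (n + C.k) = C.dir n := by
  unfold dir
  have h : n + (C.k : ℤ) + 1 = (n + 1) + C.k := by ring
  rw [h, C.periodic, C.periodic]

lemma GridCycle.dir_sub (C : GridCycle) (n : ℤ) : C.dir (n - C.k) = C.dir n := by
  have := C.dir_periodic (n - C.k)
  rw [sub_add_cancel] at this
  exact this.symm

lemma GridCycle.turnCost_periodic (C : GridCycle) (i : ℤ) :
    C.turnCost (i + C.k) = C.turnCost i := by
  rw [C.turnCost_eq, C.turnCost_eq i]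
  have h : i + (C.k : ℤ) - 1 = (i - 1) + C.k := by ring
  rw [h, C.dir_periodic, C.dir_periodic]

lemma GridCycle.pts_add_mul (C : GridCycle) (x : ℤ) (q : ℤ) :
    C.pts (x + q * C.k) = C.pts x := by
  induction q using Int.induction_on with
  | zero => simp
  | succ n ih =>
      have h : x + ((n : ℤ) + 1) * C.k = (x + n * C.k) + C.k := by ring
      rw [h, C.periodic, ih]
  | pred n ih =>
      have h : x + (-(n : ℤ) - 1) * C.k = (x + (-n) * C.k) - C.k := by ring
      rw [h, C.pts_sub, ih]

lemma GridCycle.pts_emod (C : GridCycle) (t : ℤ) : C.pts (t % C.k) = C.pts t := by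
  have h : (t % C.k) = t + (-(t / C.k)) * C.k := by
    rw [Int.emod_def]; ring
  rw [h, C.pts_add_mul]

/-- sum of a periodic function over a shifted window -/
lemma per_sum {M : Type*} [AddCancelCommMonoid M] (f : ℤ → M) (k : ℕ)
    (hf : ∀ i : ℤ, f (i + k) = f i) (a : ℤ) :
    ∑ n ∈ Finset.range k, f (a + n) = ∑ n ∈ Finset.range k, f n := by
  have step : ∀ b : ℤ, ∑ n ∈ Finset.range k, f (b + 1 + n) = ∑ n ∈ Finset.range k, f (b + n) := by
    intro b
    have h1 : ∑ n ∈ Finset.range (k + 1), f (b + n) =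
        ∑ n ∈ Finset.range k, f (b + (n + 1)) + f (b + 0) := Finset.sum_range_succ' _ _
    have h2 : ∑ n ∈ Finset.range (k + 1), f (b + n) =
        ∑ n ∈ Finset.range k, f (b + n) + f (b + k) := Finset.sum_range_succ _ _
    have h3 : f (b + k) = f b := hf b
    have h4 : ∀ n : ℕ, f (b + ((n : ℤ) + 1)) = f (b + 1 + n) := by intro n; ring_nf
    rw [h3] at h2
    simp only [add_zero] at h1
    rw [h1] at h2
    have h5 : ∑ n ∈ Finset.range k, f (b + ((n : ℕ) + 1 : ℤ)) =
        ∑ n ∈ Finset.range k, f (b + 1 + n) := by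
      apply Finset.sum_congr rfl; intro n _; push_cast; ring_nf
    rw [h5] at h2
    exact add_right_cancel h2
  induction a using Int.induction_on with
  | zero => simp
  | succ n ih => rw [show ((n : ℤ) + 1) = (n : ℤ) + 1 from rfl, step]; exact ih
  | pred n ih =>
      have := step (-(n : ℤ) - 1)
      rw [show -(n : ℤ) - 1 + 1 = -(n : ℤ) by ring] at this
      rw [this] at ih; exact ih

lemma GridCycle.turns_shift (C : GridCycle) (a : ℤ) :
    ∑ n ∈ Finset.range C.k, C.turnCost (a + n) = C.turns :=
  per_sum C.turnCost C.k C.turnCost_periodic a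

lemma GridCycle.pts_telescope (C : GridCycle) (a : ℤ) (m : ℕ) :
    C.pts (a + m) = C.pts a + ∑ n ∈ Finset.range m, C.dir (a + n) := by
  induction m with
  | zero => simp
  | succ m ih =>
      rw [Finset.sum_range_succ, ← add_assoc, ← ih]
      have h : a + ((m : ℕ) + 1 : ℤ) = (a + m) + 1 := by push_cast; ring
      push_cast
      rw [show a + ((m : ℤ) + 1) = (a + m) + 1 by ring]
      unfold dir; ring

lemma GridCycle.sum_dir (C : GridCycle) :
    ∑ n ∈ Finset.range C.k, C.dir (n : ℤ) = 0 := by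
  have h := C.pts_telescope 0 C.k
  have h2 : C.pts ((0 : ℤ) + C.k) = C.pts 0 := C.periodic 0
  rw [h2] at h
  have h3 : ∑ n ∈ Finset.range C.k, C.dir ((0 : ℤ) + n) = ∑ n ∈ Finset.range C.k, C.dir n := by
    apply Finset.sum_congr rfl; intro n _; rw [zero_add]
  rw [h3] at h
  exact left_eq_add.mp h

/- ### Part 1: every cycle has at least 4 turns -/

lemma dot_nonneg_of_ne_neg {u v : Pixel} (hu : IsDir u) (hv : IsDir v) (h : u ≠ -v) :
    0 ≤ u.1 * v.1 + u.2 * v.2 := by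
  rcases dir_cases hu with rfl | rfl | rfl | rfl <;>
    rcases dir_cases hv with rfl | rfl | rfl | rfl <;> simp_all <;> omega

lemma exists_dir_neg (C : GridCycle) : ∃ n : ℕ, n < C.k ∧ C.dir n = -(C.dir 0) := by
  by_contra hno
  push_neg at hno
  set e := C.dir 0 with he
  have hsum := C.sum_dir
  have h1 : (0 : ℤ) = ∑ n ∈ Finset.range C.k, ((C.dir n).1 * e.1 + (C.dir n).2 * e.2) := by
    rw [Finset.sum_add_distrib, ← Finset.sum_mul, ← Finset.sum_mul]
    have hf : (∑ n ∈ Finset.range C.k, (C.dir (n : ℤ)).1) = (0 : ℤ) := by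
      rw [← Prod.fst_sum, hsum]; rfl
    have hs : (∑ n ∈ Finset.range C.k, (C.dir (n : ℤ)).2) = (0 : ℤ) := by
      rw [← Prod.snd_sum, hsum]; rfl
    rw [hf, hs]; ring
  have hpos : ∀ n ∈ Finset.range C.k, 0 ≤ (C.dir n).1 * e.1 + (C.dir n).2 * e.2 := by
    intro n hn
    apply dot_nonneg_of_ne_neg (C.dir_isDir n) (C.dir_isDir 0)
    intro hcontra
    exact hno n (Finset.mem_range.mp hn) (by rw [hcontra])
  have h0mem : 0 ∈ Finset.range C.k := Finset.mem_range.mpr (by have := C.two_le; omega)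
  have hone : (1 : ℤ) ≤ ∑ n ∈ Finset.range C.k, ((C.dir n).1 * e.1 + (C.dir n).2 * e.2) := by
    have hself : (1 : ℤ) ≤ (C.dir (0:ℕ)).1 * e.1 + (C.dir (0:ℕ)).2 * e.2 := by
      have : IsDir e := C.dir_isDir 0
      rcases dir_cases this with h | h | h | h <;>
        · rw [he] at *; push_cast; rw [h]; simp
    calc (1:ℤ) ≤ (C.dir (0:ℕ)).1 * e.1 + (C.dir (0:ℕ)).2 * e.2 := hself
      _ ≤ _ := Finset.single_le_sum hpos h0mem
  linarith

/-- the potential function relative to a base direction e -/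
def phi (e u : Pixel) : ℤ := if u = e then 0 else if u = -e then 2 else 1

lemma phi_var {e u v : Pixel} (he : IsDir e) (hu : IsDir u) (hv : IsDir v) :
    |phi e v - phi e u| ≤ (tc u v : ℤ) := by
  rcases dir_cases he with rfl | rfl | rfl | rfl <;>
    rcases dir_cases hu with rfl | rfl | rfl | rfl <;>
    rcases dir_cases hv with rfl | rfl | rfl | rfl <;> decide

lemma var_bound (C : GridCycle) (a : ℤ) (m : ℕ) :
    |phi (C.dir 0) (C.dir (a + m)) - phi (C.dir 0) (C.dir a)| ≤
      (∑ n ∈ Finset.range m, tc (C.dir (a + n)) (C.dir (a + n + 1)) : ℤ) := by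
  induction m with
  | zero => simp
  | succ m ih =>
      rw [Finset.sum_range_succ]
      have h1 : a + ((m : ℕ) + 1 : ℤ) = (a + m) + 1 := by push_cast; ring
      push_cast
      rw [show a + ((m : ℤ) + 1) = a + m + 1 by ring]
      have tri : |phi (C.dir 0) (C.dir (a + m + 1)) - phi (C.dir 0) (C.dir a)| ≤
          |phi (C.dir 0) (C.dir (a + m + 1)) - phi (C.dir 0) (C.dir (a + m))| +
          |phi (C.dir 0) (C.dir (a + m)) - phi (C.dir 0) (C.dir a)| := by
        apply abs_sub_le
      have h2 := phi_var (C.dir_isDir 0) (C.dir_isDir (a + m)) (C.dir_isDir (a + m + 1))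
      push_cast at ih ⊢
      omega

lemma sum_range_split (f : ℕ → ℕ) (a b : ℕ) :
    ∑ n ∈ Finset.range (a + b), f n = ∑ n ∈ Finset.range a, f n + ∑ n ∈ Finset.range b, f (a + n) := by
  induction b with
  | zero => simp
  | succ b ih => rw [← Nat.add_assoc, Finset.sum_range_succ, Finset.sum_range_succ, ih]; ring

lemma four_le_turns (C : GridCycle) : 4 ≤ C.turns := by
  obtain ⟨n₁, hn₁k, hn₁⟩ := exists_dir_neg C
  set e := C.dir 0 with he
  have hee : e ≠ -e := by
    have : IsDir e := C.dir_isDir 0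
    rcases dir_cases this with h | h | h | h <;> rw [h] <;> decide
  have hn₁0 : n₁ ≠ 0 := by
    intro h; rw [h] at hn₁; exact hee (by rw [← hn₁]; rfl)
  -- cost between consecutive directions
  have costeq : ∀ x : ℤ, C.turnCost (x + 1) = tc (C.dir x) (C.dir (x + 1)) := by
    intro x; rw [C.turnCost_eq]; rw [show x + 1 - 1 = x by ring]
  -- turns as sum of costs of consecutive dirs
  have hturns : C.turns = ∑ n ∈ Finset.range C.k, tc (C.dir n) (C.dir (n + 1)) := by
    rw [← C.turns_shift 1]
    apply Finset.sum_congr rfl; intro n _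
    rw [show (1 : ℤ) + n = (n : ℤ) + 1 by ring, costeq]
  obtain ⟨b, hb, hb0⟩ : ∃ b, C.k = n₁ + b ∧ 0 < b := ⟨C.k - n₁, by omega, by omega⟩
  have hsplit : C.turns = (∑ n ∈ Finset.range n₁, tc (C.dir n) (C.dir (n + 1))) +
      ∑ n ∈ Finset.range b, tc (C.dir ((n₁ : ℤ) + n)) (C.dir ((n₁ : ℤ) + n + 1)) := by
    rw [hturns]
    have : Finset.range C.k = Finset.range (n₁ + b) := by rw [hb]
    rw [this, sum_range_split]
    have h2 : ∑ n ∈ Finset.range b, tc (C.dir ((n₁ + n : ℕ) : ℤ)) (C.dir (((n₁ + n : ℕ) : ℤ) + 1))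
        = ∑ n ∈ Finset.range b, tc (C.dir ((n₁ : ℤ) + n)) (C.dir ((n₁ : ℤ) + n + 1)) :=
      Finset.sum_congr rfl (fun n _ => by push_cast; try ring_nf)
    rw [h2]
  have hb1 := var_bound C 0 n₁
  have hb2 := var_bound C n₁ b
  have hphi0 : phi e (C.dir 0) = 0 := by unfold phi; rw [← he]; simp
  have hphin₁ : phi e (C.dir n₁) = 2 := by
    unfold phi; rw [hn₁]
    rw [if_neg, if_pos rfl]
    intro h; exact hee h.symm
  have hend : C.dir ((n₁ : ℤ) + (b : ℤ)) = C.dir 0 := by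
    have : (n₁ : ℤ) + (b : ℤ) = 0 + C.k := by rw [hb]; push_cast; ring
    rw [this, C.dir_periodic]
  simp only [zero_add] at hb1
  rw [hend] at hb2
  rw [hphi0, hphin₁] at hb1 hb2
  have e1 : (2 : ℤ) ≤ ∑ n ∈ Finset.range n₁, (tc (C.dir n) (C.dir (n + 1)) : ℤ) := by
    calc (2:ℤ) = |(2 : ℤ) - 0| := by norm_num
    _ ≤ _ := hb1
  have e2 : (2 : ℤ) ≤ ∑ n ∈ Finset.range b,
      (tc (C.dir ((n₁ : ℤ) + n)) (C.dir ((n₁ : ℤ) + n + 1)) : ℤ) := by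
    calc (2:ℤ) = |(0 : ℤ) - 2| := by norm_num
    _ ≤ _ := hb2
  rw [hsplit]
  have c1 : 2 ≤ ∑ n ∈ Finset.range n₁, tc (C.dir n) (C.dir (n + 1)) := by exact_mod_cast e1
  have c2 : 2 ≤ ∑ n ∈ Finset.range b, tc (C.dir ((n₁:ℤ) + n)) (C.dir ((n₁:ℤ) + n + 1)) := by
    exact_mod_cast e2
  omega

/- ### Splicing two cycles at a common pixel -/

section Splice
variable (A B : GridCycle) (i j : ℤ)

def spliceK : ℤ := (A.k : ℤ) + (B.k : ℤ)

lemma spliceK_pos : 0 < spliceK A B := by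
  have := A.two_le; have := B.two_le
  unfold spliceK; push_cast; omega

def splicePts (n : ℤ) : Pixel :=
  if n % spliceK A B < (A.k : ℤ) then A.pts (i + n % spliceK A B)
  else B.pts (j + n % spliceK A B - A.k)

lemma splicePts_mod (n : ℤ) : splicePts A B i j (n % spliceK A B) = splicePts A B i j n := by
  unfold splicePts
  rw [Int.emod_emod_of_dvd n (dvd_refl _)]

lemma splicePts_period (n : ℤ) : splicePts A B i j (n + spliceK A B) = splicePts A B i j n := by
  unfold splicePts
  rw [show n + spliceK A B = n + spliceK A B * 1 by ring, Int.add_mul_emod_self_left]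

lemma splicePts_lo {n : ℤ} (h0 : 0 ≤ n) (h1 : n ≤ (A.k : ℤ)) (hj : A.pts i = B.pts j) :
    splicePts A B i j n = A.pts (i + n) := by
  have hK := spliceK_pos A B
  have hB : 2 ≤ B.k := B.two_le
  rcases eq_or_lt_of_le h1 with rfl | hlt
  · -- n = A.k
    have hmod : (A.k : ℤ) % spliceK A B = (A.k : ℤ) := by
      apply Int.emod_eq_of_lt (by positivity)
      unfold spliceK; push_cast; omega
    unfold splicePts
    rw [hmod, if_neg (by omega)]
    rw [show j + (A.k : ℤ) - A.k = j by ring]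
    rw [← hj, ← A.periodic i]
  · have hmod : n % spliceK A B = n := by
      apply Int.emod_eq_of_lt h0
      unfold spliceK at *; omega
    unfold splicePts
    rw [hmod, if_pos hlt]

lemma splicePts_hi {n : ℤ} (h0 : (A.k : ℤ) ≤ n) (h1 : n ≤ spliceK A B) (hj : A.pts i = B.pts j) :
    splicePts A B i j n = B.pts (j + n - A.k) := by
  have hK := spliceK_pos A B
  rcases eq_or_lt_of_le h1 with rfl | hlt
  · -- n = K
    have hmod : (spliceK A B) % spliceK A B = 0 := Int.emod_self
    have hA : 2 ≤ A.k := A.two_le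
    unfold splicePts
    rw [hmod, if_pos (by exact_mod_cast (by omega : (0:ℤ) < (A.k:ℤ)))]
    rw [add_zero, hj]
    have : j + spliceK A B - A.k = j + B.k := by unfold spliceK; ring
    rw [this, B.periodic]
  · have hA : (2:ℤ) ≤ A.k := by exact_mod_cast A.two_le
    have hmod : n % spliceK A B = n := Int.emod_eq_of_lt (by omega) hlt
    unfold splicePts
    rw [hmod, if_neg (by omega)]

def splice (hj : A.pts i = B.pts j) : GridCycle where
  k := A.k + B.k
  two_le := le_trans A.two_le (Nat.le_add_right _ _)
  pts := splicePts A B i j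
  periodic := by
    intro n
    have : ((A.k + B.k : ℕ) : ℤ) = spliceK A B := by unfold spliceK; push_cast; ring
    rw [this]; exact splicePts_period A B i j n
  adj := by
    intro n
    have key : ∀ m : ℤ, 0 ≤ m → m < spliceK A B →
        Adjacent (splicePts A B i j m) (splicePts A B i j (m + 1)) := by
      intro m hm0 hm1
      have hA : (2:ℤ) ≤ A.k := by exact_mod_cast A.two_le
      have hB : (2:ℤ) ≤ B.k := by exact_mod_cast B.two_le
      by_cases hc : m + 1 ≤ (A.k : ℤ)
      · -- both described by lo (m ≤ A.k - 1 so m ≤ A.k too)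
        rw [splicePts_lo A B i j hm0 (by omega) hj, splicePts_lo A B i j (by omega) hc hj]
        rw [show i + (m + 1) = (i + m) + 1 by ring]
        exact A.adj (i + m)
      · have hge : (A.k : ℤ) ≤ m := by omega
        have h1K : m + 1 ≤ spliceK A B := by omega
        rw [splicePts_hi A B i j hge (by omega) hj, splicePts_hi A B i j (by omega) h1K hj]
        rw [show j + (m + 1) - A.k = (j + m - A.k) + 1 by ring]
        exact B.adj (j + m - A.k)
    have h1 : splicePts A B i j n = splicePts A B i j (n % spliceK A B) :=
      (splicePts_mod A B i j n).symm
    have h2 : splicePts A B i j (n + 1) = splicePts A B i j (n % spliceK A B + 1) := by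
      rw [← splicePts_mod A B i j (n + 1), ← splicePts_mod A B i j (n % spliceK A B + 1),
        Int.emod_add_emod]
    rw [h1, h2]
    exact key _ (Int.emod_nonneg n (ne_of_gt (spliceK_pos A B))) (Int.emod_lt_of_pos n (spliceK_pos A B))

variable (hj : A.pts i = B.pts j)

lemma splice_dir_lo {n : ℤ} (h0 : 0 ≤ n) (h1 : n < (A.k : ℤ)) :
    (splice A B i j hj).dir n = A.dir (i + n) := by
  unfold GridCycle.dir
  show splicePts A B i j (n + 1) - splicePts A B i j n = _
  rw [splicePts_lo A B i j h0 (by omega) hj, splicePts_lo A B i j (by omega) (by omega) hj]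
  rw [show i + (n + 1) = (i + n) + 1 by ring]

lemma splice_dir_hi {n : ℤ} (h0 : (A.k : ℤ) ≤ n) (h1 : n < spliceK A B) :
    (splice A B i j hj).dir n = B.dir (j + n - A.k) := by
  unfold GridCycle.dir
  show splicePts A B i j (n + 1) - splicePts A B i j n = _
  rw [splicePts_hi A B i j h0 (by omega) hj, splicePts_hi A B i j (by omega) (by omega) hj]
  rw [show j + (n + 1) - A.k = (j + n - A.k) + 1 by ring]

lemma splice_covers : (splice A B i j hj).covers = A.covers ∪ B.covers := by
  have hA : (2:ℤ) ≤ A.k := by exact_mod_cast A.two_le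
  have hB : (2:ℤ) ≤ B.k := by exact_mod_cast B.two_le
  apply Set.eq_of_subset_of_subset
  · rintro x ⟨n, rfl⟩
    show (splicePts A B i j n) ∈ _
    rw [← splicePts_mod A B i j n]
    set m := n % spliceK A B with hm
    have hm0 : 0 ≤ m := Int.emod_nonneg n (ne_of_gt (spliceK_pos A B))
    have hm1 : m < spliceK A B := Int.emod_lt_of_pos n (spliceK_pos A B)
    by_cases hc : m < (A.k : ℤ)
    · rw [splicePts_lo A B i j hm0 (by omega) hj]; exact Or.inl ⟨i + m, rfl⟩
    · rw [splicePts_hi A B i j (by omega) (by omega) hj]; exact Or.inr ⟨j + m - A.k, rfl⟩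
  · rintro x (⟨t, rfl⟩ | ⟨t, rfl⟩)
    · refine ⟨(t - i) % A.k, ?_⟩
      have h0 : 0 ≤ (t - i) % A.k := Int.emod_nonneg _ (by omega)
      have h1 : (t - i) % A.k < (A.k : ℤ) := Int.emod_lt_of_pos _ (by omega)
      show splicePts A B i j _ = _
      rw [splicePts_lo A B i j h0 (by omega) hj]
      have : i + (t - i) % A.k = t + (-((t - i) / A.k)) * A.k := by
        rw [Int.emod_def]; ring
      rw [this, A.pts_add_mul]
    · refine ⟨(A.k : ℤ) + (t - j) % B.k, ?_⟩
      have h0 : 0 ≤ (t - j) % B.k := Int.emod_nonneg _ (by omega)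
      have h1 : (t - j) % B.k < (B.k : ℤ) := Int.emod_lt_of_pos _ (by omega)
      show splicePts A B i j _ = _
      rw [splicePts_hi A B i j (by omega) (by unfold spliceK; omega) hj]
      have : j + ((A.k : ℤ) + (t - j) % B.k) - A.k = t + (-((t - j) / B.k)) * B.k := by
        rw [Int.emod_def]; ring
      rw [this, B.pts_add_mul]
end Splice

section SpliceTurns
variable (A B : GridCycle) (i j : ℤ) (hj : A.pts i = B.pts j)

lemma splice_k_cast : ((splice A B i j hj).k : ℤ) = spliceK A B := by
  show ((A.k + B.k : ℕ) : ℤ) = _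
  unfold spliceK; push_cast; ring

lemma splice_dir_neg_one : (splice A B i j hj).dir (-1) = B.dir (j - 1) := by
  have h := (splice A B i j hj).dir_periodic (-1)
  rw [splice_k_cast] at h
  rw [← h]
  have hA : (2:ℤ) ≤ A.k := by exact_mod_cast A.two_le
  have hB : (2:ℤ) ≤ B.k := by exact_mod_cast B.two_le
  rw [splice_dir_hi A B i j hj (by unfold spliceK; omega) (by omega)]
  have : j + (-1 + spliceK A B) - A.k = (j - 1) + B.k := by unfold spliceK; ring
  rw [this, B.dir_periodic]

lemma splice_tc_zero : (splice A B i j hj).turnCost 0 = tc (B.dir (j - 1)) (A.dir i) := by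
  rw [GridCycle.turnCost_eq]
  rw [show (0:ℤ) - 1 = -1 by ring, splice_dir_neg_one]
  rw [splice_dir_lo A B i j hj le_rfl (by exact_mod_cast Nat.lt_of_lt_of_le Nat.zero_lt_two A.two_le)]
  rw [add_zero]

lemma splice_tc_mid1 {n : ℤ} (h0 : 1 ≤ n) (h1 : n < (A.k : ℤ)) :
    (splice A B i j hj).turnCost n = A.turnCost (i + n) := by
  rw [GridCycle.turnCost_eq, GridCycle.turnCost_eq]
  rw [splice_dir_lo A B i j hj (by omega) h1,
      splice_dir_lo A B i j hj (n := n - 1) (by omega) (by omega)]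
  rw [show i + (n - 1) = i + n - 1 by ring]

lemma splice_tc_kA : (splice A B i j hj).turnCost (A.k : ℤ) = tc (A.dir (i - 1)) (B.dir j) := by
  have hA : (2:ℤ) ≤ A.k := by exact_mod_cast A.two_le
  have hB : (2:ℤ) ≤ B.k := by exact_mod_cast B.two_le
  rw [GridCycle.turnCost_eq]
  rw [splice_dir_lo A B i j hj (n := (A.k : ℤ) - 1) (by omega) (by omega)]
  rw [splice_dir_hi A B i j hj le_rfl (by unfold spliceK; omega)]
  rw [show i + ((A.k:ℤ) - 1) = (i - 1) + A.k by ring, A.dir_periodic,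
      show j + (A.k:ℤ) - A.k = j by ring]

lemma splice_tc_mid2 {n : ℤ} (h0 : (A.k : ℤ) + 1 ≤ n) (h1 : n < spliceK A B) :
    (splice A B i j hj).turnCost n = B.turnCost (j + n - A.k) := by
  rw [GridCycle.turnCost_eq, GridCycle.turnCost_eq]
  rw [splice_dir_hi A B i j hj (by omega) h1,
      splice_dir_hi A B i j hj (n := n - 1) (by omega) (by omega)]
  rw [show j + (n - 1) - A.k = (j + n - A.k) - 1 by ring]

lemma turns_splice :
    (splice A B i j hj).turns + A.turnCost i + B.turnCost j
      = A.turns + B.turns + tc (B.dir (j - 1)) (A.dir i) + tc (A.dir (i - 1)) (B.dir j) := by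
  have hA : 2 ≤ A.k := A.two_le
  have hB : 2 ≤ B.k := B.two_le
  have hks : (splice A B i j hj).k = A.k + B.k := rfl
  have hsplit : (splice A B i j hj).turns =
      (∑ n ∈ Finset.range A.k, (splice A B i j hj).turnCost n) +
      ∑ n ∈ Finset.range B.k, (splice A B i j hj).turnCost ((A.k + n : ℕ) : ℤ) := by
    unfold GridCycle.turns
    rw [hks, sum_range_split]
  have h0A : (0:ℕ) ∈ Finset.range A.k := Finset.mem_range.mpr (by omega)
  have h0B : (0:ℕ) ∈ Finset.range B.k := Finset.mem_range.mpr (by omega)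
  -- block 1
  have e1 : ∑ n ∈ Finset.range A.k, (splice A B i j hj).turnCost n
      = tc (B.dir (j - 1)) (A.dir i) + ∑ n ∈ (Finset.range A.k).erase 0,
          (splice A B i j hj).turnCost n := by
    rw [← Finset.add_sum_erase _ _ h0A]
    congr 1
    rw [Nat.cast_zero, splice_tc_zero]
  have e2 : ∑ n ∈ (Finset.range A.k).erase 0, (splice A B i j hj).turnCost n
      = ∑ n ∈ (Finset.range A.k).erase 0, A.turnCost (i + n) := by
    apply Finset.sum_congr rfl
    intro n hn
    have h2 : n ≠ 0 := Finset.ne_of_mem_erase hn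
    have h3 : n < A.k := Finset.mem_range.mp (Finset.mem_of_mem_erase hn)
    have hc2 : (1:ℤ) ≤ (n:ℤ) := by exact_mod_cast Nat.one_le_iff_ne_zero.mpr h2
    have hc3 : (n:ℤ) < (A.k:ℤ) := by exact_mod_cast h3
    exact splice_tc_mid1 A B i j hj hc2 hc3
  have e3 : A.turns = A.turnCost i + ∑ n ∈ (Finset.range A.k).erase 0, A.turnCost (i + n) := by
    rw [← A.turns_shift i, ← Finset.add_sum_erase _ _ h0A]
    congr 1
    rw [Nat.cast_zero, add_zero]
  -- block 2
  have f1 : ∑ n ∈ Finset.range B.k, (splice A B i j hj).turnCost ((A.k + n : ℕ) : ℤ)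
      = tc (A.dir (i - 1)) (B.dir j) + ∑ n ∈ (Finset.range B.k).erase 0,
          (splice A B i j hj).turnCost ((A.k + n : ℕ) : ℤ) := by
    rw [← Finset.add_sum_erase _ _ h0B]
    congr 1
    rw [show ((A.k + 0 : ℕ) : ℤ) = (A.k : ℤ) by push_cast; ring, splice_tc_kA]
  have f2 : ∑ n ∈ (Finset.range B.k).erase 0, (splice A B i j hj).turnCost ((A.k + n : ℕ) : ℤ)
      = ∑ n ∈ (Finset.range B.k).erase 0, B.turnCost (j + n) := by
    apply Finset.sum_congr rfl
    intro n hn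
    have h2 : n ≠ 0 := Finset.ne_of_mem_erase hn
    have h3 : n < B.k := Finset.mem_range.mp (Finset.mem_of_mem_erase hn)
    have hc2 : (1:ℤ) ≤ (n:ℤ) := by exact_mod_cast Nat.one_le_iff_ne_zero.mpr h2
    have hc3 : (n:ℤ) < (B.k:ℤ) := by exact_mod_cast h3
    have hcast : ((A.k + n : ℕ) : ℤ) = (A.k : ℤ) + n := by push_cast; ring
    rw [hcast, splice_tc_mid2 A B i j hj (by omega) (by unfold spliceK; omega)]
    rw [show j + ((A.k:ℤ) + n) - A.k = j + n by ring]
  have f3 : B.turns = B.turnCost j + ∑ n ∈ (Finset.range B.k).erase 0, B.turnCost (j + n) := by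
    rw [← B.turns_shift j, ← Finset.add_sum_erase _ _ h0B]
    congr 1
    rw [Nat.cast_zero, add_zero]
  omega
end SpliceTurns

/- ### Reversal -/

def GridCycle.rev (C : GridCycle) : GridCycle where
  k := C.k
  two_le := C.two_le
  pts := fun n => C.pts (-n)
  periodic := by
    intro n
    show C.pts (-(n + (C.k:ℤ))) = C.pts (-n)
    rw [show -(n + (C.k:ℤ)) = -n - C.k by ring, C.pts_sub]
  adj := by
    intro n
    show Adjacent (C.pts (-n)) (C.pts (-(n+1)))
    have h := C.adj (-n - 1)
    rw [show -n - 1 + 1 = -n by ring] at h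
    rw [show -(n+1) = -n - 1 by ring]
    exact adjacent_symm h

lemma rev_covers (C : GridCycle) : C.rev.covers = C.covers := by
  apply Set.eq_of_subset_of_subset
  · rintro x ⟨n, rfl⟩; exact ⟨-n, rfl⟩
  · rintro x ⟨n, rfl⟩; exact ⟨-n, by show C.pts (-(-n)) = _; rw [neg_neg]⟩

lemma rev_dir (C : GridCycle) (n : ℤ) : C.rev.dir n = -(C.dir (-n - 1)) := by
  show C.pts (-(n+1)) - C.pts (-n) = -(C.pts ((-n-1) + 1) - C.pts (-n-1))
  rw [show (-n-1) + 1 = -n by ring, show -(n+1) = -n - 1 by ring]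
  ring

lemma tc_neg (u v : Pixel) : tc (-u) (-v) = tc u v := by
  unfold tc
  simp only [neg_neg, neg_inj, neg_eq_iff_eq_neg]

lemma tc_comm (u v : Pixel) : tc u v = tc v u := by
  unfold tc
  refine if_congr ⟨Eq.symm, Eq.symm⟩ rfl (if_congr ⟨?_, ?_⟩ rfl rfl)
  · intro h; rw [h, neg_neg]
  · intro h; rw [h, neg_neg]

lemma rev_turnCost (C : GridCycle) (n : ℤ) : C.rev.turnCost n = C.turnCost (-n) := by
  rw [GridCycle.turnCost_eq, GridCycle.turnCost_eq, rev_dir, rev_dir]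
  rw [show -(n-1) - 1 = -n by ring]
  rw [tc_neg, tc_comm]

lemma rev_turns (C : GridCycle) : C.rev.turns = C.turns := by
  show ∑ n ∈ Finset.range C.k, C.rev.turnCost (n:ℤ) = C.turns
  have h1 : ∑ n ∈ Finset.range C.k, C.rev.turnCost (n:ℤ)
      = ∑ n ∈ Finset.range C.k, C.turnCost (-(n:ℤ)) :=
    Finset.sum_congr rfl (fun n _ => rev_turnCost C n)
  rw [h1]
  have h2 := Finset.sum_range_reflect (fun m : ℕ => C.turnCost (-(m:ℤ))) C.k
  rw [← h2]
  have h3 : ∑ j ∈ Finset.range C.k, C.turnCost (-(((C.k - 1 - j : ℕ)):ℤ))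
      = ∑ j ∈ Finset.range C.k, C.turnCost ((-(C.k:ℤ) + 1) + j) := by
    apply Finset.sum_congr rfl
    intro j hj
    have hj' : j < C.k := Finset.mem_range.mp hj
    have h2k := C.two_le
    have hc : (((C.k - 1 - j : ℕ)):ℤ) = (C.k:ℤ) - 1 - j := by omega
    rw [hc, show -((C.k:ℤ) - 1 - j) = (-(C.k:ℤ)+1) + j by ring]
  rw [h3, C.turns_shift]

/- ### The two-pixel cycle -/

def twoCycle (p q : Pixel) (h : Adjacent p q) : GridCycle where
  k := 2
  two_le := le_refl 2
  pts := fun n => if n % 2 = 0 then p else q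
  periodic := by
    intro n
    have : (n + ((2:ℕ):ℤ)) % 2 = n % 2 := by omega
    simp only [this]
  adj := by
    intro n
    rcases Int.emod_two_eq n with h0 | h0
    · have h1 : (n + 1) % 2 = 1 := by omega
      simp only [h0, h1]
      norm_num
      exact h
    · have h1 : (n + 1) % 2 = 0 := by omega
      simp only [h0, h1]
      norm_num
      exact adjacent_symm h

lemma twoCycle_pts_even (p q : Pixel) (h : Adjacent p q) {n : ℤ} (hn : n % 2 = 0) :
    (twoCycle p q h).pts n = p := by
  show (if n % 2 = 0 then p else q) = p
  rw [if_pos hn]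

lemma twoCycle_pts_odd (p q : Pixel) (h : Adjacent p q) {n : ℤ} (hn : n % 2 = 1) :
    (twoCycle p q h).pts n = q := by
  show (if n % 2 = 0 then p else q) = q
  rw [if_neg (by omega)]

lemma twoCycle_dir_even (p q : Pixel) (h : Adjacent p q) {n : ℤ} (hn : n % 2 = 0) :
    (twoCycle p q h).dir n = q - p := by
  unfold GridCycle.dir
  rw [twoCycle_pts_even p q h hn, twoCycle_pts_odd p q h (by omega)]

lemma twoCycle_dir_odd (p q : Pixel) (h : Adjacent p q) {n : ℤ} (hn : n % 2 = 1) :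
    (twoCycle p q h).dir n = p - q := by
  unfold GridCycle.dir
  rw [twoCycle_pts_odd p q h hn, twoCycle_pts_even p q h (by omega)]

lemma adjacent_ne {p q : Pixel} (h : Adjacent p q) : p ≠ q := by
  intro hc
  unfold Adjacent at h
  rw [hc] at h
  simp at h

lemma pixNegNeSelf {u : Pixel} (hu : u ≠ 0) : -u ≠ u := by
  intro hc
  apply hu
  have h1 : -u.1 = u.1 := by have := congrArg Prod.fst hc; simpa using this
  have h2 : -u.2 = u.2 := by have := congrArg Prod.snd hc; simpa using this
  have e1 : u.1 = 0 := by omega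
  have e2 : u.2 = 0 := by omega
  rw [Prod.ext_iff]
  constructor <;> simp [e1, e2]

lemma tc_uturn {u : Pixel} (hu : u ≠ 0) : tc u (-u) = 2 := by
  unfold tc
  rw [if_neg (pixNegNeSelf hu), if_pos rfl]

lemma tc_uturn' {u : Pixel} (hu : u ≠ 0) : tc (-u) u = 2 := by
  unfold tc
  rw [if_neg (fun hc => (pixNegNeSelf hu) hc.symm), if_pos (neg_neg u).symm]

lemma twoCycle_turnCost (p q : Pixel) (h : Adjacent p q) (n : ℤ) :
    (twoCycle p q h).turnCost n = 2 := by
  have hne : q - p ≠ 0 := sub_ne_zero.mpr (fun hc => adjacent_ne h hc.symm)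
  rw [GridCycle.turnCost_eq]
  rcases Int.emod_two_eq n with h0 | h0
  · rw [twoCycle_dir_even p q h h0, twoCycle_dir_odd p q h (by omega)]
    rw [show p - q = -(q - p) by ring]
    exact tc_uturn' hne
  · rw [twoCycle_dir_odd p q h h0, twoCycle_dir_even p q h (by omega)]
    rw [show p - q = -(q - p) by ring]
    exact tc_uturn hne

lemma twoCycle_turns (p q : Pixel) (h : Adjacent p q) : (twoCycle p q h).turns = 4 := by
  show ∑ n ∈ Finset.range 2, (twoCycle p q h).turnCost n = 4
  rw [Finset.sum_range_succ, Finset.sum_range_one, twoCycle_turnCost, twoCycle_turnCost]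

lemma twoCycle_covers (p q : Pixel) (h : Adjacent p q) :
    (twoCycle p q h).covers ⊆ {p, q} := by
  rintro x ⟨n, rfl⟩
  rcases Int.emod_two_eq n with h0 | h0
  · rw [twoCycle_pts_even p q h h0]; exact Or.inl rfl
  · rw [twoCycle_pts_odd p q h h0]; exact Or.inr rfl

/- ### Finite direction case checks -/

lemma lemU {a₁ a₂ b₁ b₂ : Pixel} (h1 : IsDir a₁) (h2 : IsDir a₂) (h3 : IsDir b₁) (h4 : IsDir b₂) :
    tc b₁ a₂ + tc a₁ b₂ ≤ tc a₁ a₂ + tc b₁ b₂ + 2 ∨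
    tc (-b₂) a₂ + tc a₁ (-b₁) ≤ tc a₁ a₂ + tc b₁ b₂ + 2 := by
  rcases dir_cases h1 with rfl | rfl | rfl | rfl <;>
    rcases dir_cases h2 with rfl | rfl | rfl | rfl <;>
    rcases dir_cases h3 with rfl | rfl | rfl | rfl <;>
    rcases dir_cases h4 with rfl | rfl | rfl | rfl <;> decide

lemma lemV {w a₁ a₂ b₁ b₂ : Pixel} (hw : IsDir w)
    (h1 : IsDir a₁) (h2 : IsDir a₂) (h3 : IsDir b₁) (h4 : IsDir b₂)
    (c1 : a₁ ≠ -w) (c2 : a₂ ≠ w) (c3 : b₁ ≠ w) (c4 : b₂ ≠ -w) :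
    tc (-w) a₂ + tc a₁ w + tc b₁ (-w) + tc w b₂ ≤ tc a₁ a₂ + tc b₁ b₂ + 2 ∨
    (a₁ = a₂ ∧ tc a₂ w = 1 ∧ b₁ = b₂ ∧ tc b₂ w = 1) := by
  rcases dir_cases hw with rfl | rfl | rfl | rfl <;>
    rcases dir_cases h1 with rfl | rfl | rfl | rfl <;>
    rcases dir_cases h2 with rfl | rfl | rfl | rfl <;>
    rcases dir_cases h3 with rfl | rfl | rfl | rfl <;>
    rcases dir_cases h4 with rfl | rfl | rfl | rfl <;>
    first
      | (exact absurd rfl c1)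
      | (exact absurd rfl c2)
      | (exact absurd rfl c3)
      | (exact absurd rfl c4)
      | decide

lemma lemPerp {x y w : Pixel} (hx : IsDir x) (hy : IsDir y) (hw : IsDir w)
    (h1 : tc x w = 1) (h2 : tc y w = 1) : y = x ∨ y = -x := by
  rcases dir_cases hw with rfl | rfl | rfl | rfl <;>
    rcases dir_cases hx with rfl | rfl | rfl | rfl <;>
    rcases dir_cases hy with rfl | rfl | rfl | rfl <;>
    first
      | (left; rfl)
      | (right; decide)
      | (exfalso; revert h1 h2; decide)

lemma fval_ne_zero {s : Pixel} (hs : IsDir s) : 2 * s.1 + 3 * s.2 ≠ 0 := by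
  rcases dir_cases hs with rfl | rfl | rfl | rfl <;> decide

/- ### Merging two close cycles -/

lemma mem_covers_of_pts (C : GridCycle) (n : ℤ) : C.pts n ∈ C.covers := ⟨n, rfl⟩

lemma isDir_ne_zero {u : Pixel} (h : IsDir u) : u ≠ 0 := by
  rcases dir_cases h with rfl | rfl | rfl | rfl <;> decide

lemma adjacent_translate {p q s : Pixel} (h : Adjacent p q) : Adjacent (p + s) (q + s) := by
  unfold Adjacent at *
  have e1 : (p + s).1 - (q + s).1 = p.1 - q.1 := by show p.1 + s.1 - (q.1 + s.1) = _; ring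
  have e2 : (p + s).2 - (q + s).2 = p.2 - q.2 := by show p.2 + s.2 - (q.2 + s.2) = _; ring
  rw [e1, e2]; exact h

def coversFinset (C : GridCycle) : Finset Pixel := (Finset.range C.k).image fun n : ℕ => C.pts (n : ℤ)

lemma mem_coversFinset {C : GridCycle} {x : Pixel} : x ∈ coversFinset C ↔ x ∈ C.covers := by
  unfold coversFinset
  rw [Finset.mem_image]
  constructor
  · rintro ⟨n, _, rfl⟩; exact ⟨n, rfl⟩
  · rintro ⟨t, rfl⟩
    have hk : 0 < C.k := by have := C.two_le; omega
    refine ⟨(t % C.k).toNat, Finset.mem_range.mpr ?_, ?_⟩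
    · have h1 : t % C.k < (C.k : ℤ) := Int.emod_lt_of_pos t (by exact_mod_cast hk)
      have h0 : 0 ≤ t % C.k := Int.emod_nonneg t (by exact_mod_cast hk.ne')
      omega
    · have h0 : 0 ≤ t % C.k := Int.emod_nonneg t (by positivity)
      rw [Int.toNat_of_nonneg h0, C.pts_emod]

set_option maxHeartbeats 2000000 in
lemma merge_close (C₁ C₂ : GridCycle)
    (h : ∃ p ∈ C₁.covers, ∃ q ∈ C₂.covers, p = q ∨ Adjacent p q) :
    ∃ C : GridCycle, C.covers = C₁.covers ∪ C₂.covers ∧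
      C.turns ≤ C₁.turns + C₂.turns + 2 := by
  by_cases hsh : ∃ i j : ℤ, C₁.pts i = C₂.pts j
  · -- shared pixel
    obtain ⟨i, j, hij⟩ := hsh
    rcases lemU (C₁.dir_isDir (i-1)) (C₁.dir_isDir i) (C₂.dir_isDir (j-1)) (C₂.dir_isDir j)
      with hU | hU
    · refine ⟨splice C₁ C₂ i j hij, splice_covers C₁ C₂ i j hij, ?_⟩
      have heq := turns_splice C₁ C₂ i j hij
      rw [C₁.turnCost_eq i, C₂.turnCost_eq j] at heq
      omega
    · have hij' : C₁.pts i = C₂.rev.pts (-j) := by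
        show C₁.pts i = C₂.pts (-(-j))
        rw [neg_neg]; exact hij
      refine ⟨splice C₁ C₂.rev i (-j) hij', ?_, ?_⟩
      · rw [splice_covers, rev_covers]
      · have heq := turns_splice C₁ C₂.rev i (-j) hij'
        rw [C₁.turnCost_eq i] at heq
        rw [rev_turnCost C₂ (-j), neg_neg, C₂.turnCost_eq j] at heq
        rw [rev_turns] at heq
        rw [rev_dir, rev_dir] at heq
        rw [show -(-j - 1) - 1 = j by ring, show -(-j) - 1 = j - 1 by ring] at heq
        omega
  · -- bridge
    -- every close pair is an adjacent (non-equal) pair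
    obtain ⟨p₀, hp₀, q₀, hq₀, hcl⟩ := h
    have hcl' : Adjacent p₀ q₀ := by
      rcases hcl with rfl | hadj
      · exfalso
        obtain ⟨i, hi⟩ := hp₀
        obtain ⟨j, hj⟩ := hq₀
        exact hsh ⟨i, j, by rw [hi, hj]⟩
      · exact hadj
    -- the finset of adjacent pairs
    classical
    set s : Finset (Pixel × Pixel) :=
      (coversFinset C₁ ×ˢ coversFinset C₂).filter (fun r => Adjacent r.1 r.2) with hs
    have hne : s.Nonempty := by
      refine ⟨(p₀, q₀), ?_⟩
      rw [hs, Finset.mem_filter, Finset.mem_product]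
      exact ⟨⟨mem_coversFinset.mpr hp₀, mem_coversFinset.mpr hq₀⟩, hcl'⟩
    obtain ⟨r, hr, hmax⟩ := Finset.exists_max_image s
      (fun r => 2 * r.1.1 + 3 * r.1.2 + 2 * r.2.1 + 3 * r.2.2) hne
    rw [hs, Finset.mem_filter, Finset.mem_product] at hr
    obtain ⟨⟨hrp, hrq⟩, hadj⟩ := hr
    obtain ⟨i, hpi⟩ := mem_coversFinset.mp hrp
    obtain ⟨j, hqj⟩ := mem_coversFinset.mp hrq
    set p := r.1 with hp
    set q := r.2 with hq
    set w : Pixel := q - p with hwdef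
    have hw : IsDir w := adjacent_iff.mp hadj
    have hqpw : q = p + w := by rw [hwdef]; ring
    -- basic point identities
    have hA1 : C₁.pts (i + 1) = p + C₁.dir i := by
      rw [← hpi]; unfold GridCycle.dir; ring
    have hA0 : C₁.pts (i - 1) = p - C₁.dir (i - 1) := by
      rw [← hpi]
      unfold GridCycle.dir
      rw [show i - 1 + 1 = i by ring]
      ring
    have hB1 : C₂.pts (j + 1) = q + C₂.dir j := by
      rw [← hqj]; unfold GridCycle.dir; ring
    have hB0 : C₂.pts (j - 1) = q - C₂.dir (j - 1) := by
      rw [← hqj]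
      unfold GridCycle.dir
      rw [show j - 1 + 1 = j by ring]
      ring
    -- the four constraints
    have c1 : C₁.dir (i - 1) ≠ -w := by
      intro hc
      apply hsh
      refine ⟨i - 1, j, ?_⟩
      rw [hA0, hc, hqj, hqpw]; ring
    have c2 : C₁.dir i ≠ w := by
      intro hc
      apply hsh
      refine ⟨i + 1, j, ?_⟩
      rw [hA1, hc, hqj, hqpw]
    have c3 : C₂.dir (j - 1) ≠ w := by
      intro hc
      apply hsh
      refine ⟨i, j - 1, ?_⟩
      rw [hB0, hc, hpi, hqpw]; ring
    have c4 : C₂.dir j ≠ -w := by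
      intro hc
      apply hsh
      refine ⟨i, j + 1, ?_⟩
      rw [hB1, hc, hpi, hqpw]; ring
    rcases lemV hw (C₁.dir_isDir (i-1)) (C₁.dir_isDir i) (C₂.dir_isDir (j-1)) (C₂.dir_isDir j)
      c1 c2 c3 c4 with hV | hbad
    · -- good case : build the bridged cycle
      have hq2 : (twoCycle p q hadj).pts 1 = C₂.pts j := by
        rw [twoCycle_pts_odd p q hadj (by norm_num), hqj]
      set M := splice (twoCycle p q hadj) C₂ 1 j hq2 with hM
      have hTwoK : (((twoCycle p q hadj).k : ℕ) : ℤ) = 2 := rfl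
      have hTwoTc : (twoCycle p q hadj).turnCost 1 = 2 := twoCycle_turnCost _ _ _ 1
      have hTwoturns : (twoCycle p q hadj).turns = 4 := twoCycle_turns _ _ _
      have hTwoDir1 : (twoCycle p q hadj).dir 1 = -w := by
        rw [twoCycle_dir_odd p q hadj (by decide), hwdef]; ring
      have hTwoDir0 : (twoCycle p q hadj).dir (1 - 1) = w := by
        rw [show (1:ℤ)-1 = 0 by ring, twoCycle_dir_even p q hadj (by decide), hwdef]
      have hMp : M.pts 1 = p := by
        rw [hM]
        show splicePts (twoCycle p q hadj) C₂ 1 j 1 = p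
        rw [splicePts_lo (twoCycle p q hadj) C₂ 1 j (by norm_num) (by rw [hTwoK]; norm_num) hq2]
        exact twoCycle_pts_even p q hadj (by decide)
      have hCp : C₁.pts i = M.pts 1 := by rw [hMp, hpi]
      refine ⟨splice C₁ M i 1 hCp, ?_, ?_⟩
      · rw [splice_covers]
        have hMc : M.covers = (twoCycle p q hadj).covers ∪ C₂.covers := by
          rw [hM]; exact splice_covers _ _ _ _ _
        rw [hMc]
        apply Set.eq_of_subset_of_subset
        · rintro x (hx | hx | hx)
          · exact Or.inl hx
          · have h2 := twoCycle_covers p q hadj hx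
            rcases Set.mem_insert_iff.mp h2 with h3 | h3
            · exact Or.inl ⟨i, by rw [hpi, ← h3]⟩
            · have h4 : x = q := Set.mem_singleton_iff.mp h3
              exact Or.inr ⟨j, by rw [hqj, ← h4]⟩
          · exact Or.inr hx
        · rintro x (hx | hx)
          · exact Or.inl hx
          · exact Or.inr (Or.inr hx)
      · have hMturn := turns_splice (twoCycle p q hadj) C₂ 1 j hq2
        rw [← hM] at hMturn
        rw [hTwoTc, hTwoturns, hTwoDir1, hTwoDir0, C₂.turnCost_eq j] at hMturn
        have hMdir0 : M.dir (1 - 1) = -w := by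
          rw [show (1:ℤ)-1 = 0 by ring, hM]
          rw [splice_dir_lo (twoCycle p q hadj) C₂ 1 j hq2 le_rfl (by rw [hTwoK]; norm_num)]
          rw [add_zero, hTwoDir1]
        have hMdir1 : M.dir 1 = w := by
          rw [hM]
          rw [splice_dir_lo (twoCycle p q hadj) C₂ 1 j hq2 (by norm_num) (by rw [hTwoK]; norm_num)]
          have : (twoCycle p q hadj).dir (1 + 1) = (twoCycle p q hadj).dir 2 := by norm_num
          rw [this, twoCycle_dir_even p q hadj (by decide), hwdef]
        have hMtc1 : M.turnCost 1 = 2 := by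
          rw [GridCycle.turnCost_eq, hMdir0, hMdir1]
          exact tc_uturn' (isDir_ne_zero hw)
        have hCt := turns_splice C₁ M i 1 hCp
        rw [hMtc1, hMdir0, hMdir1, C₁.turnCost_eq i] at hCt
        omega
    · -- bad case : contradiction with maximality of the pair
      exfalso
      obtain ⟨hEa, hpa, hEb, hpb⟩ := hbad
      have hb2 := lemPerp (C₁.dir_isDir i) (C₂.dir_isDir j) hw hpa hpb
      have m1 : p + C₁.dir i ∈ C₁.covers := ⟨i + 1, hA1⟩
      have m2 : p - C₁.dir i ∈ C₁.covers := ⟨i - 1, by rw [hA0, hEa]⟩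
      have m3 : q + C₂.dir j ∈ C₂.covers := ⟨j + 1, hB1⟩
      have m4 : q - C₂.dir j ∈ C₂.covers := ⟨j - 1, by rw [hB0, hEb]⟩
      set sv := C₁.dir i with hsv
      have hqplus : q + sv ∈ C₂.covers := by
        rcases hb2 with h | h
        · rw [← h]; exact m3
        · have h' : sv = -(C₂.dir j) := by rw [h, neg_neg]
          rw [h', ← sub_eq_add_neg]; exact m4
      have hqminus : q + (-sv) ∈ C₂.covers := by
        rcases hb2 with h | h
        · rw [← h, ← sub_eq_add_neg]; exact m4
        · rw [← h]; exact m3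
      have m2' : p + (-sv) ∈ C₁.covers := by
        rw [← sub_eq_add_neg]; exact m2
      have hpair : ∀ t : Pixel, p + t ∈ C₁.covers → q + t ∈ C₂.covers →
          2*(p+t).1 + 3*(p+t).2 + 2*(q+t).1 + 3*(q+t).2 ≤ 2*p.1+3*p.2+2*q.1+3*q.2 := by
        intro t h1 h2
        have hmem : (p + t, q + t) ∈ s := by
          rw [hs, Finset.mem_filter, Finset.mem_product]
          exact ⟨⟨mem_coversFinset.mpr h1, mem_coversFinset.mpr h2⟩, adjacent_translate hadj⟩
        exact hmax _ hmem
      have h1 := hpair sv m1 hqplus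
      have h2 := hpair (-sv) m2' hqminus
      have hnz : 2 * sv.1 + 3 * sv.2 ≠ 0 := fval_ne_zero (C₁.dir_isDir i)
      have e1 : (p + sv).1 = p.1 + sv.1 := rfl
      have e2 : (p + sv).2 = p.2 + sv.2 := rfl
      have e3 : (q + sv).1 = q.1 + sv.1 := rfl
      have e4 : (q + sv).2 = q.2 + sv.2 := rfl
      have e5 : (p + -sv).1 = p.1 - sv.1 := by show p.1 + (-sv).1 = _; show p.1 + -sv.1 = _; ring
      have e6 : (p + -sv).2 = p.2 - sv.2 := by show p.2 + (-sv).2 = _; show p.2 + -sv.2 = _; ring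
      have e7 : (q + -sv).1 = q.1 - sv.1 := by show q.1 + (-sv).1 = _; show q.1 + -sv.1 = _; ring
      have e8 : (q + -sv).2 = q.2 - sv.2 := by show q.2 + (-sv).2 = _; show q.2 + -sv.2 = _; ring
      rw [e1, e2, e3, e4] at h1
      rw [e5, e6, e7, e8] at h2
      omega

/- ### Assembling a tour from a cycle cover -/

def ConnectedIn' (P : Set Pixel) : Prop :=
  ∀ p ∈ P, ∀ q ∈ P, Relation.ReflTransGen (fun a b => b ∈ P ∧ Adjacent a b) p q

def Close (C₁ C₂ : GridCycle) : Prop :=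
  ∃ p ∈ C₁.covers, ∃ q ∈ C₂.covers, p = q ∨ Adjacent p q

lemma exists_close_pair (P : Set Pixel) (hconn : ConnectedIn' P)
    (C₀ : GridCycle) (rest : List GridCycle)
    (hsub : ∀ C ∈ C₀ :: rest, C.covers ⊆ P)
    (hcov : ∀ p ∈ P, ∃ C ∈ C₀ :: rest, p ∈ C.covers)
    (hrest : rest ≠ []) :
    ∃ C₁ C₂ l, (C₀ :: rest).Perm (C₁ :: C₂ :: l) ∧ Close C₁ C₂ := by
  classical
  by_cases hd : C₀ ∈ rest
  · exact ⟨C₀, C₀, rest.erase C₀, List.Perm.cons C₀ (List.perm_cons_erase hd),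
      C₀.pts 0, ⟨0, rfl⟩, C₀.pts 0, ⟨0, rfl⟩, Or.inl rfl⟩
  · by_contra hno
    have key : ∀ z, Relation.ReflTransGen (fun a b => b ∈ P ∧ Adjacent a b) (C₀.pts 0) z →
        z ∈ C₀.covers := by
      intro z hz
      induction hz with
      | refl => exact ⟨0, rfl⟩
      | @tail b c hab hbc ih =>
          obtain ⟨hcP, hadj⟩ := hbc
          obtain ⟨C', hC', hcC'⟩ := hcov _ hcP
          by_cases hcc : C' = C₀
          · rw [hcc] at hcC'; exact hcC'
          · exfalso
            have hC'rest : C' ∈ rest := by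
              rcases List.mem_cons.mp hC' with h | h
              · exact absurd h hcc
              · exact h
            exact hno ⟨C₀, C', rest.erase C',
              List.Perm.cons C₀ (List.perm_cons_erase hC'rest),
              b, ih, c, hcC', Or.inr hadj⟩
    obtain ⟨C₂, hC₂⟩ : ∃ C, C ∈ rest := List.exists_mem_of_ne_nil rest hrest
    have hq : C₂.pts 0 ∈ P := hsub C₂ (List.mem_cons_of_mem _ hC₂) ⟨0, rfl⟩
    have hp : C₀.pts 0 ∈ P := hsub C₀ (List.mem_cons_self) ⟨0, rfl⟩
    have hz := key _ (hconn _ hp _ hq)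
    exact hno ⟨C₀, C₂, rest.erase C₂, List.Perm.cons C₀ (List.perm_cons_erase hC₂),
      C₂.pts 0, hz, C₂.pts 0, ⟨0, rfl⟩, Or.inl rfl⟩

def coverTurns' (CC : List GridCycle) : ℕ := (CC.map GridCycle.turns).sum

lemma tour_from_list (P : Set Pixel) (hconn : ConnectedIn' P) :
    ∀ m : ℕ, ∀ CC : List GridCycle, CC.length = m → CC ≠ [] →
    (∀ C ∈ CC, C.covers ⊆ P) → (∀ p ∈ P, ∃ C ∈ CC, p ∈ C.covers) →
    ∃ C : GridCycle, C.covers = P ∧ C.turns ≤ coverTurns' CC + 2 * (m - 1) := by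
  intro m
  induction m using Nat.strong_induction_on with
  | _ m ih =>
    intro CC hlen hne hsub hcov
    rcases CC with _ | ⟨C₀, rest⟩
    · exact absurd rfl hne
    by_cases hr : rest = []
    · subst hr
      refine ⟨C₀, ?_, ?_⟩
      · apply Set.eq_of_subset_of_subset (hsub C₀ (List.mem_cons_self))
        intro p hp
        obtain ⟨C, hC, hpc⟩ := hcov p hp
        have : C = C₀ := by simpa using hC
        rw [← this]; exact hpc
      · have : coverTurns' [C₀] = C₀.turns := by
          unfold coverTurns'; simp
        omega
    · obtain ⟨C₁, C₂, l, hperm, hclose⟩ := exists_close_pair P hconn C₀ rest hsub hcov hr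
      obtain ⟨D, hDcov, hDturn⟩ := merge_close C₁ C₂ hclose
      have hlenCC : rest.length + 1 = m := by simpa using hlen
      have hlen2 : m = l.length + 2 := by
        have h := hperm.length_eq
        simp at h
        omega
      have hsub' : ∀ C ∈ D :: l, C.covers ⊆ P := by
        intro C hC
        rcases List.mem_cons.mp hC with rfl | hC
        · rw [hDcov]
          apply Set.union_subset
          · exact hsub C₁ (hperm.mem_iff.mpr (List.mem_cons_self))
          · exact hsub C₂ (hperm.mem_iff.mpr (List.mem_cons_of_mem _ (List.mem_cons_self)))
        · exact hsub C (hperm.mem_iff.mpr (List.mem_cons_of_mem _ (List.mem_cons_of_mem _ hC)))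
      have hcov' : ∀ p ∈ P, ∃ C ∈ D :: l, p ∈ C.covers := by
        intro p hp
        obtain ⟨C, hC, hpc⟩ := hcov p hp
        have hC2 : C ∈ C₁ :: C₂ :: l := hperm.mem_iff.mp hC
        rcases List.mem_cons.mp hC2 with rfl | hC2
        · exact ⟨D, List.mem_cons_self, by rw [hDcov]; exact Or.inl hpc⟩
        · rcases List.mem_cons.mp hC2 with rfl | hC2
          · exact ⟨D, List.mem_cons_self, by rw [hDcov]; exact Or.inr hpc⟩
          · exact ⟨C, List.mem_cons_of_mem _ hC2, hpc⟩
      obtain ⟨C, hCc, hCt⟩ := ih (m - 1) (by omega) (D :: l) (by simp; omega)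
        (by simp) hsub' hcov'
      refine ⟨C, hCc, ?_⟩
      have hsum : coverTurns' (C₀ :: rest) = C₁.turns + C₂.turns + coverTurns' l := by
        unfold coverTurns'
        rw [(hperm.map GridCycle.turns).sum_eq]
        rw [List.map_cons, List.map_cons, List.sum_cons, List.sum_cons]
        ring
      have hsum' : coverTurns' (D :: l) = D.turns + coverTurns' l := by
        unfold coverTurns'
        rw [List.map_cons, List.sum_cons]
      omega

/- ### Main theorem -/

/-- Every cycle has at least 4 turns; consequently a cycle cover of a region
`P` with `t` turns yields a tour of `P` with at most `(3/2)·t` turns. -/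
theorem four_turns_and_tour_from_cycle_cover :
    (∀ C : GridCycle, 4 ≤ C.turns) ∧
    ∀ P : Set Pixel, IsRegion P → ∀ CC : List GridCycle, IsCycleCover P CC →
      ∃ C : GridCycle, IsTour P C ∧ 2 * C.turns ≤ 3 * coverTurns CC := by
  constructor
  · exact four_le_turns
  · intro P hP CC hCC
    obtain ⟨hfin, hPne, hconn⟩ := hP
    obtain ⟨hsub, hcov⟩ := hCC
    have hconn' : ConnectedIn' P := hconn
    have hCCne : CC ≠ [] := by
      obtain ⟨p, hp⟩ := hPne
      obtain ⟨C, hC, _⟩ := hcov p hp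
      intro h
      rw [h] at hC
      exact (List.not_mem_nil) hC
    obtain ⟨C, hCc, hCt⟩ := tour_from_list P hconn' CC.length CC rfl hCCne hsub hcov
    refine ⟨C, hCc, ?_⟩
    have h4 : ∀ l : List GridCycle, 4 * l.length ≤ coverTurns' l := by
      intro l
      induction l with
      | nil => simp [coverTurns']
      | cons a t iht =>
          have ha := four_le_turns a
          unfold coverTurns' at *
          rw [List.map_cons, List.sum_cons, List.length_cons]
          omega
    have hlb := h4 CC
    have hlen1 : 1 ≤ CC.length := List.length_pos_iff.mpr hCCne
    have heq : coverTurns CC = coverTurns' CC := rfl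
    rw [heq]
    omega
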